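/- arXiv:2506.13570 — 3 statements merged into one kernel-verified Lean document; each statement's English description precedes it below -/
import Mathlib

section
/- Let d ≥ 1 and let q1, q2, q3 : ℝ → ℝ^d be a solution of the three-body problem in ℝ^d with arbitrary positive masses m1, m2, m3 > 0. If two of the three mutual distances r_ij(t) = ‖q_i(t) − q_j(t)‖ are constant in t, then the third mutual distance is also constant in t; that is, the solution is a relative equilibrium. -/
open scoped InnerProductSpace

open Polynomial in
noncomputable def QQaux (a b : ℝ) : ℝ[X] :=
  C 8 * X^2 * (C (a^3) - X^3) * (C (b^3) - X^3)
  - C 3 * ((C (a^2-b^2) + X^2) * C (b^3) * (C (a^3) - X^3)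
    + (C (b^2-a^2) + X^2) * C (a^3) * (C (b^3) - X^3))

lemma QQaux_ne_zero (a b : ℝ) : QQaux a b ≠ 0 := by
  intro h
  have h2 : (QQaux a b).coeff 8 = 8 := by unfold QQaux; compute_degree!
  rw [h] at h2
  simp only [Polynomial.coeff_zero] at h2
  exact absurd h2 (by norm_num)

lemma QQaux_eval (a b x : ℝ) : (QQaux a b).eval x =
    8*x^2*(a^3-x^3)*(b^3-x^3) - 3*((a^2-b^2+x^2)*b^3*(a^3-x^3) + (b^2-a^2+x^2)*a^3*(b^3-x^3)) := by
  simp only [QQaux, Polynomial.eval_sub, Polynomial.eval_add, Polynomial.eval_mul,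
    Polynomial.eval_pow, Polynomial.eval_C, Polynomial.eval_X]
  try ring

/-- Abstract core: `u = q1 - q2`, `v = q1 - q3` with constant norms forces
`‖u - v‖` constant. -/
theorem key2 {E : Type*} [NormedAddCommGroup E] [InnerProductSpace ℝ E]
    (m1 m2 m3 a b : ℝ) (hm2 : 0 < m2) (hm3 : 0 < m3) (ha0 : 0 < a) (hb0 : 0 < b)
    (u v du dv ddu ddv : ℝ → E)
    (hu : ∀ t, HasDerivAt u (du t) t) (hv : ∀ t, HasDerivAt v (dv t) t)
    (hdu : ∀ t, HasDerivAt du (ddu t) t) (hdv : ∀ t, HasDerivAt dv (ddv t) t)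
    (hcdu : Continuous du) (hcdv : Continuous dv)
    (ha : ∀ t, ‖u t‖ = a) (hb : ∀ t, ‖v t‖ = b)
    (hw : ∀ t, u t ≠ v t)
    (hddu : ∀ t, ddu t = (-((m1+m2)/a^3)) • u t + (-(m3/b^3)) • v t
      + (-(m3/‖u t - v t‖^3)) • (u t - v t))
    (hddv : ∀ t, ddv t = (-(m2/a^3)) • u t + (-((m1+m3)/b^3)) • v t
      + (m2/‖u t - v t‖^3) • (u t - v t)) :
    ∃ c, ∀ t, ‖u t - v t‖ = c := by
  classical
  set r : ℝ → ℝ := fun t => Real.sqrt (a^2 + b^2 - 2 * ⟪u t, v t⟫_ℝ) with hr_def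
  have hnu : ∀ t, ⟪u t, u t⟫_ℝ = a^2 := fun t => by
    rw [real_inner_self_eq_norm_sq, ha t]
  have hnv : ∀ t, ⟪v t, v t⟫_ℝ = b^2 := fun t => by
    rw [real_inner_self_eq_norm_sq, hb t]
  have hs_eq : ∀ t, ‖u t - v t‖^2 = a^2 + b^2 - 2 * ⟪u t, v t⟫_ℝ := fun t => by
    rw [norm_sub_sq_real, ha t, hb t]; ring
  have hwne : ∀ t, u t - v t ≠ 0 := fun t => sub_ne_zero.mpr (hw t)
  have hspos : ∀ t, 0 < a^2 + b^2 - 2 * ⟪u t, v t⟫_ℝ := fun t => by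
    rw [← hs_eq t]; exact pow_pos (norm_pos_iff.mpr (hwne t)) 2
  have hrpos : ∀ t, 0 < r t := fun t => Real.sqrt_pos.mpr (hspos t)
  have hrnorm : ∀ t, ‖u t - v t‖ = r t := fun t => by
    have hx : r t = Real.sqrt (a^2 + b^2 - 2 * ⟪u t, v t⟫_ℝ) := rfl
    rw [hx, ← hs_eq t, Real.sqrt_sq (norm_nonneg _)]
  have hr2 : ∀ t, r t ^ 2 = a^2 + b^2 - 2 * ⟪u t, v t⟫_ℝ := fun t =>
    Real.sq_sqrt (hspos t).le
  have hP : ∀ t, 2 * ⟪u t, v t⟫_ℝ = a^2 + b^2 - r t ^ 2 := fun t => by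
    rw [hr2 t]; ring
  -- derivatives of p and r
  have hp' : ∀ t, HasDerivAt (fun t => ⟪u t, v t⟫_ℝ)
      (⟪u t, dv t⟫_ℝ + ⟪du t, v t⟫_ℝ) t := fun t => (hu t).inner ℝ (hv t)
  have hs' : ∀ t, HasDerivAt (fun t => a^2 + b^2 - 2 * ⟪u t, v t⟫_ℝ)
      (-(2 * (⟪u t, dv t⟫_ℝ + ⟪du t, v t⟫_ℝ))) t := fun t =>
    ((hp' t).const_mul 2).const_sub (a^2 + b^2)
  have hr' : ∀ t, HasDerivAt r
      (-(2 * (⟪u t, dv t⟫_ℝ + ⟪du t, v t⟫_ℝ)) / (2 * r t)) t := fun t =>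
    (hs' t).sqrt (hspos t).ne'
  -- orthogonality from constant norms
  have hud : ∀ t, ⟪u t, du t⟫_ℝ = 0 := by
    intro t
    have h1 : HasDerivAt (fun t => ⟪u t, u t⟫_ℝ) (⟪u t, du t⟫_ℝ + ⟪du t, u t⟫_ℝ) t :=
      (hu t).inner ℝ (hu t)
    have h2 : (fun t => ⟪u t, u t⟫_ℝ) = fun _ => a^2 := funext hnu
    rw [h2] at h1
    have h3 := h1.unique (hasDerivAt_const t (a^2))
    have h4 : ⟪du t, u t⟫_ℝ = ⟪u t, du t⟫_ℝ := real_inner_comm _ _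
    linarith
  have hvd : ∀ t, ⟪v t, dv t⟫_ℝ = 0 := by
    intro t
    have h1 : HasDerivAt (fun t => ⟪v t, v t⟫_ℝ) (⟪v t, dv t⟫_ℝ + ⟪dv t, v t⟫_ℝ) t :=
      (hv t).inner ℝ (hv t)
    have h2 : (fun t => ⟪v t, v t⟫_ℝ) = fun _ => b^2 := funext hnv
    rw [h2] at h1
    have h3 := h1.unique (hasDerivAt_const t (b^2))
    have h4 : ⟪dv t, v t⟫_ℝ = ⟪v t, dv t⟫_ℝ := real_inner_comm _ _
    linarith
  have hudd : ∀ t, ⟪u t, ddu t⟫_ℝ = -(⟪du t, du t⟫_ℝ) := by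
    intro t
    have h1 : HasDerivAt (fun t => ⟪u t, du t⟫_ℝ) (⟪u t, ddu t⟫_ℝ + ⟪du t, du t⟫_ℝ) t :=
      (hu t).inner ℝ (hdu t)
    have h2 : (fun t => ⟪u t, du t⟫_ℝ) = fun _ => 0 := funext hud
    rw [h2] at h1
    have h3 := h1.unique (hasDerivAt_const t 0)
    linarith
  have hvdd : ∀ t, ⟪v t, ddv t⟫_ℝ = -(⟪dv t, dv t⟫_ℝ) := by
    intro t
    have h1 : HasDerivAt (fun t => ⟪v t, dv t⟫_ℝ) (⟪v t, ddv t⟫_ℝ + ⟪dv t, dv t⟫_ℝ) t :=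
      (hv t).inner ℝ (hdv t)
    have h2 : (fun t => ⟪v t, dv t⟫_ℝ) = fun _ => 0 := funext hvd
    rw [h2] at h1
    have h3 := h1.unique (hasDerivAt_const t 0)
    linarith
  -- the "energy" identities
  have hK : ∀ t, ⟪du t, du t⟫_ℝ = (m1+m2)/a^3*a^2 + m3/b^3 * ⟪u t, v t⟫_ℝ
      + m3 * (a^2 - ⟪u t, v t⟫_ℝ) / (r t)^3 := by
    intro t
    have h1 := hudd t
    rw [hddu t] at h1
    simp only [inner_add_right, inner_smul_right, inner_sub_right] at h1
    rw [hnu t, hrnorm t] at h1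
    linear_combination h1
  have hL : ∀ t, ⟪dv t, dv t⟫_ℝ = (m1+m3)/b^3*b^2 + m2/a^3 * ⟪u t, v t⟫_ℝ
      + m2 * (b^2 - ⟪u t, v t⟫_ℝ) / (r t)^3 := by
    intro t
    have h1 := hvdd t
    rw [hddv t] at h1
    simp only [inner_add_right, inner_smul_right, inner_sub_right] at h1
    rw [hnv t, hrnorm t, real_inner_comm (u t) (v t)] at h1
    linear_combination h1
  -- pointwise polynomial identity wherever p' ≠ 0
  have hroot : ∀ t, ⟪u t, dv t⟫_ℝ + ⟪du t, v t⟫_ℝ ≠ 0 → (QQaux a b).eval (r t) = 0 := by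
    intro t hne
    have hcomm : ∀ x y : E, ⟪x, y⟫_ℝ = ⟪y, x⟫_ℝ := fun x y => real_inner_comm y x
    -- derivative of ⟪du,du⟫ via the ODE
    have hKd1 : HasDerivAt (fun t => ⟪du t, du t⟫_ℝ)
        (2 * (m3/(r t)^3 * ⟪du t, v t⟫_ℝ - m3/b^3 * ⟪du t, v t⟫_ℝ)) t := by
      have h1 : HasDerivAt (fun t => ⟪du t, du t⟫_ℝ)
          (⟪du t, ddu t⟫_ℝ + ⟪ddu t, du t⟫_ℝ) t := (hdu t).inner ℝ (hdu t)
      have h2 : ⟪du t, ddu t⟫_ℝ + ⟪ddu t, du t⟫_ℝ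
          = 2 * (m3/(r t)^3 * ⟪du t, v t⟫_ℝ - m3/b^3 * ⟪du t, v t⟫_ℝ) := by
        rw [hcomm (ddu t) (du t), hddu t]
        simp only [inner_add_right, inner_smul_right, inner_sub_right]
        rw [hcomm (du t) (u t), hud t, hrnorm t]
        ring
      rw [h2] at h1; exact h1
    -- derivative of the energy expression
    have hKd2 : HasDerivAt (fun t => (m1+m2)/a^3*a^2 + m3/b^3 * ⟪u t, v t⟫_ℝ
          + m3 * (a^2 - ⟪u t, v t⟫_ℝ) / (r t)^3)
        (m3/b^3 * (⟪u t, dv t⟫_ℝ + ⟪du t, v t⟫_ℝ)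
          + (m3 * -(⟪u t, dv t⟫_ℝ + ⟪du t, v t⟫_ℝ) * (r t)^3
            - m3 * (a^2 - ⟪u t, v t⟫_ℝ) * (((3:ℕ):ℝ) * r t ^ (3-1)
              * (-(2 * (⟪u t, dv t⟫_ℝ + ⟪du t, v t⟫_ℝ)) / (2 * r t)))) / ((r t)^3)^2) t := by
      have h2a : HasDerivAt (fun t => (m1+m2)/a^3*a^2 + m3/b^3 * ⟪u t, v t⟫_ℝ)
          (m3/b^3 * (⟪u t, dv t⟫_ℝ + ⟪du t, v t⟫_ℝ)) t :=
        ((hp' t).const_mul (m3/b^3)).const_add ((m1+m2)/a^3*a^2)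
      have h3 : HasDerivAt (fun t => m3 * (a^2 - ⟪u t, v t⟫_ℝ))
          (m3 * -(⟪u t, dv t⟫_ℝ + ⟪du t, v t⟫_ℝ)) t :=
        ((hp' t).const_sub (a^2)).const_mul m3
      have h4 : HasDerivAt (fun t => (r t)^3)
          (((3:ℕ):ℝ) * r t ^ (3-1) * (-(2 * (⟪u t, dv t⟫_ℝ + ⟪du t, v t⟫_ℝ)) / (2 * r t))) t :=
        (hr' t).pow 3
      exact h2a.add (h3.div h4 (pow_ne_zero 3 (hrpos t).ne'))
    have hfunK : (fun t => ⟪du t, du t⟫_ℝ) = (fun t => (m1+m2)/a^3*a^2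
        + m3/b^3 * ⟪u t, v t⟫_ℝ + m3 * (a^2 - ⟪u t, v t⟫_ℝ) / (r t)^3) := funext hK
    rw [hfunK] at hKd1
    have hG1 := hKd1.unique hKd2
    -- derivative of ⟪dv,dv⟫ via the ODE
    have hLd1 : HasDerivAt (fun t => ⟪dv t, dv t⟫_ℝ)
        (2 * (m2/(r t)^3 * ⟪u t, dv t⟫_ℝ - m2/a^3 * ⟪u t, dv t⟫_ℝ)) t := by
      have h1 : HasDerivAt (fun t => ⟪dv t, dv t⟫_ℝ)
          (⟪dv t, ddv t⟫_ℝ + ⟪ddv t, dv t⟫_ℝ) t := (hdv t).inner ℝ (hdv t)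
      have h2 : ⟪dv t, ddv t⟫_ℝ + ⟪ddv t, dv t⟫_ℝ
          = 2 * (m2/(r t)^3 * ⟪u t, dv t⟫_ℝ - m2/a^3 * ⟪u t, dv t⟫_ℝ) := by
        rw [hcomm (ddv t) (dv t), hddv t]
        simp only [inner_add_right, inner_smul_right, inner_sub_right]
        rw [hcomm (dv t) (v t), hvd t, hrnorm t, hcomm (dv t) (u t)]
        ring
      rw [h2] at h1; exact h1
    have hLd2 : HasDerivAt (fun t => (m1+m3)/b^3*b^2 + m2/a^3 * ⟪u t, v t⟫_ℝ
          + m2 * (b^2 - ⟪u t, v t⟫_ℝ) / (r t)^3)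
        (m2/a^3 * (⟪u t, dv t⟫_ℝ + ⟪du t, v t⟫_ℝ)
          + (m2 * -(⟪u t, dv t⟫_ℝ + ⟪du t, v t⟫_ℝ) * (r t)^3
            - m2 * (b^2 - ⟪u t, v t⟫_ℝ) * (((3:ℕ):ℝ) * r t ^ (3-1)
              * (-(2 * (⟪u t, dv t⟫_ℝ + ⟪du t, v t⟫_ℝ)) / (2 * r t)))) / ((r t)^3)^2) t := by
      have h2a : HasDerivAt (fun t => (m1+m3)/b^3*b^2 + m2/a^3 * ⟪u t, v t⟫_ℝ)
          (m2/a^3 * (⟪u t, dv t⟫_ℝ + ⟪du t, v t⟫_ℝ)) t :=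
        ((hp' t).const_mul (m2/a^3)).const_add ((m1+m3)/b^3*b^2)
      have h3 : HasDerivAt (fun t => m2 * (b^2 - ⟪u t, v t⟫_ℝ))
          (m2 * -(⟪u t, dv t⟫_ℝ + ⟪du t, v t⟫_ℝ)) t :=
        ((hp' t).const_sub (b^2)).const_mul m2
      have h4 : HasDerivAt (fun t => (r t)^3)
          (((3:ℕ):ℝ) * r t ^ (3-1) * (-(2 * (⟪u t, dv t⟫_ℝ + ⟪du t, v t⟫_ℝ)) / (2 * r t))) t :=
        (hr' t).pow 3
      exact h2a.add (h3.div h4 (pow_ne_zero 3 (hrpos t).ne'))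
    have hfunL : (fun t => ⟪dv t, dv t⟫_ℝ) = (fun t => (m1+m3)/b^3*b^2
        + m2/a^3 * ⟪u t, v t⟫_ℝ + m2 * (b^2 - ⟪u t, v t⟫_ℝ) / (r t)^3) := funext hL
    rw [hfunL] at hLd1
    have hG2 := hLd1.unique hLd2
    have hRne : r t ≠ 0 := (hrpos t).ne'
    have hane : a ≠ 0 := ha0.ne'
    have hbne : b ≠ 0 := hb0.ne'
    norm_num at hG1 hG2
    field_simp at hG1 hG2
    have clean1 : (b^3 - r t^3) * (3*⟪du t, v t⟫_ℝ + ⟪u t, dv t⟫_ℝ) * r t^2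
        = 3*(a^2 - ⟪u t, v t⟫_ℝ)*(⟪du t, v t⟫_ℝ + ⟪u t, dv t⟫_ℝ)*b^3 := by
      apply mul_left_cancel₀ (show 2*m3*b^3*r t^5 ≠ 0 from
        mul_ne_zero (mul_ne_zero (mul_ne_zero two_ne_zero hm3.ne') (pow_ne_zero 3 hbne))
          (pow_ne_zero 5 hRne))
      linear_combination (2*m3*b^3*r t^5) * hG1
    have clean2 : (a^3 - r t^3) * (⟪du t, v t⟫_ℝ + 3*⟪u t, dv t⟫_ℝ) * r t^2
        = 3*(b^2 - ⟪u t, v t⟫_ℝ)*(⟪du t, v t⟫_ℝ + ⟪u t, dv t⟫_ℝ)*a^3 := by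
      apply mul_left_cancel₀ (show 2*m2*a^3*r t^5 ≠ 0 from
        mul_ne_zero (mul_ne_zero (mul_ne_zero two_ne_zero hm2.ne') (pow_ne_zero 3 hane))
          (pow_ne_zero 5 hRne))
      linear_combination (2*m2*a^3*r t^5) * hG2
    have hmain : (⟪u t, dv t⟫_ℝ + ⟪du t, v t⟫_ℝ) *
        (8*(r t)^2*(a^3-(r t)^3)*(b^3-(r t)^3)
          - 3*((a^2-b^2+(r t)^2)*b^3*(a^3-(r t)^3) + (b^2-a^2+(r t)^2)*a^3*(b^3-(r t)^3))) = 0 := by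
      linear_combination (2*(a^3-(r t)^3))*clean1 + (2*(b^3-(r t)^3))*clean2
        + (-3*(⟪du t, v t⟫_ℝ + ⟪u t, dv t⟫_ℝ)*(b^3*(a^3-(r t)^3)+a^3*(b^3-(r t)^3)))*(hP t)
    rw [QQaux_eval]
    rcases mul_eq_zero.mp hmain with h | h
    · exact absurd h hne
    · exact h
  -- continuity
  have hcu : Continuous u := Differentiable.continuous (fun t => (hu t).differentiableAt)
  have hcv : Continuous v := Differentiable.continuous (fun t => (hv t).differentiableAt)
  have hcAB : Continuous (fun t => ⟪u t, dv t⟫_ℝ + ⟪du t, v t⟫_ℝ) :=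
    (hcu.inner hcdv).add (hcdu.inner hcv)
  have hcp : Continuous (fun t => ⟪u t, v t⟫_ℝ) := hcu.inner hcv
  have hcr : Continuous r :=
    Real.continuous_sqrt.comp (continuous_const.sub (continuous_const.mul hcp))
  have hAB0 : ∀ t0, ⟪u t0, dv t0⟫_ℝ + ⟪du t0, v t0⟫_ℝ = 0 := by
    intro t0
    by_contra hne
    have hop : IsOpen {t | ⟪u t, dv t⟫_ℝ + ⟪du t, v t⟫_ℝ ≠ 0} :=
      isOpen_compl_singleton.preimage hcAB
    obtain ⟨ε, hε0, hball⟩ := Metric.isOpen_iff.mp hop t0 hne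
    have hfin : ((r '' Metric.ball t0 ε)).Finite :=
      (Polynomial.finite_setOf_isRoot (QQaux_ne_zero a b)).subset
        (by rintro x ⟨τ, hτ, rfl⟩; exact hroot τ (hball hτ))
    have hconn : IsPreconnected (r '' Metric.ball t0 ε) :=
      ((convex_ball t0 ε).isPreconnected).image r hcr.continuousOn
    have hsub : (r '' Metric.ball t0 ε).Subsingleton := by
      by_contra hns
      rw [Set.not_subsingleton_iff] at hns
      obtain ⟨x, hx, y, hy, hxy⟩ := hns
      rcases hxy.lt_or_gt with h | h
      · exact (Set.Icc_infinite h) (hfin.subset (hconn.ordConnected.out hx hy))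
      · exact (Set.Icc_infinite h) (hfin.subset (hconn.ordConnected.out hy hx))
    have hmem : r t0 ∈ r '' Metric.ball t0 ε := ⟨t0, Metric.mem_ball_self hε0, rfl⟩
    have hplocal : (fun t => ⟪u t, v t⟫_ℝ) =ᶠ[nhds t0] (fun _ => ⟪u t0, v t0⟫_ℝ) := by
      filter_upwards [Metric.ball_mem_nhds t0 hε0] with τ hτ
      have h1 := hP τ
      have h2 := hP t0
      have h3 : r τ = r t0 := hsub ⟨τ, hτ, rfl⟩ hmem
      rw [h3] at h1
      linarith
    have h0 : HasDerivAt (fun t => ⟪u t, v t⟫_ℝ) 0 t0 :=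
      (hasDerivAt_const t0 _).congr_of_eventuallyEq hplocal
    exact hne ((hp' t0).unique h0)
  refine ⟨r 0, fun t => ?_⟩
  rw [hrnorm t]
  have hconst : ⟪u t, v t⟫_ℝ = ⟪u 0, v 0⟫_ℝ :=
    is_const_of_deriv_eq_zero (fun τ => (hp' τ).differentiableAt)
      (fun τ => by rw [(hp' τ).deriv]; exact hAB0 τ) t 0
  show Real.sqrt (a^2 + b^2 - 2 * ⟪u t, v t⟫_ℝ) = r 0
  rw [hconst]

theorem keyQ {d : ℕ} (m1 m2 m3 : ℝ)
    (hm1 : 0 < m1) (hm2 : 0 < m2) (hm3 : 0 < m3)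
    (q1 q2 q3 : ℝ → EuclideanSpace ℝ (Fin d))
    (hq1 : ContDiff ℝ 2 q1) (hq2 : ContDiff ℝ 2 q2) (hq3 : ContDiff ℝ 2 q3)
    (hsep12 : ∀ t, q1 t ≠ q2 t) (hsep13 : ∀ t, q1 t ≠ q3 t)
    (hsep23 : ∀ t, q2 t ≠ q3 t)
    (hN1 : ∀ t, deriv (deriv q1) t =
      (m2 / ‖q2 t - q1 t‖ ^ 3) • (q2 t - q1 t) +
        (m3 / ‖q3 t - q1 t‖ ^ 3) • (q3 t - q1 t))
    (hN2 : ∀ t, deriv (deriv q2) t =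
      (m1 / ‖q1 t - q2 t‖ ^ 3) • (q1 t - q2 t) +
        (m3 / ‖q3 t - q2 t‖ ^ 3) • (q3 t - q2 t))
    (hN3 : ∀ t, deriv (deriv q3) t =
      (m1 / ‖q1 t - q3 t‖ ^ 3) • (q1 t - q3 t) +
        (m2 / ‖q2 t - q3 t‖ ^ 3) • (q2 t - q3 t))
    (h12 : ∃ c, ∀ t, ‖q1 t - q2 t‖ = c) (h13 : ∃ c, ∀ t, ‖q1 t - q3 t‖ = c) :
    ∃ c, ∀ t, ‖q2 t - q3 t‖ = c := by
  obtain ⟨a, ha⟩ := h12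
  obtain ⟨b, hb⟩ := h13
  have ha0 : 0 < a := ha 0 ▸ norm_sub_pos_iff.mpr (hsep12 0)
  have hb0 : 0 < b := hb 0 ▸ norm_sub_pos_iff.mpr (hsep13 0)
  have d1 : Differentiable ℝ q1 := hq1.differentiable two_ne_zero
  have d2 : Differentiable ℝ q2 := hq2.differentiable two_ne_zero
  have d3 : Differentiable ℝ q3 := hq3.differentiable two_ne_zero
  have d1' : Differentiable ℝ (deriv q1) :=
    (contDiff_succ_iff_deriv.mp (by exact_mod_cast hq1 : ContDiff ℝ (1+1) q1)).2.2.differentiable one_ne_zero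
  have d2' : Differentiable ℝ (deriv q2) :=
    (contDiff_succ_iff_deriv.mp (by exact_mod_cast hq2 : ContDiff ℝ (1+1) q2)).2.2.differentiable one_ne_zero
  have d3' : Differentiable ℝ (deriv q3) :=
    (contDiff_succ_iff_deriv.mp (by exact_mod_cast hq3 : ContDiff ℝ (1+1) q3)).2.2.differentiable one_ne_zero
  have e3 : ∀ t, (q1 t - q2 t) - (q1 t - q3 t) = q3 t - q2 t := fun t => by abel
  have hKey := key2 m1 m2 m3 a b hm2 hm3 ha0 hb0
    (fun t => q1 t - q2 t) (fun t => q1 t - q3 t)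
    (fun t => deriv q1 t - deriv q2 t) (fun t => deriv q1 t - deriv q3 t)
    (fun t => deriv (deriv q1) t - deriv (deriv q2) t)
    (fun t => deriv (deriv q1) t - deriv (deriv q3) t)
    (fun t => ((d1 t).hasDerivAt).sub ((d2 t).hasDerivAt))
    (fun t => ((d1 t).hasDerivAt).sub ((d3 t).hasDerivAt))
    (fun t => ((d1' t).hasDerivAt).sub ((d2' t).hasDerivAt))
    (fun t => ((d1' t).hasDerivAt).sub ((d3' t).hasDerivAt))
    ((hq1.continuous_deriv one_le_two).sub (hq2.continuous_deriv one_le_two))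
    ((hq1.continuous_deriv one_le_two).sub (hq3.continuous_deriv one_le_two))
    ha hb
    (fun t h => hsep23 t (sub_right_inj.mp h))
    (fun t => by
      show deriv (deriv q1) t - deriv (deriv q2) t
          = (-((m1+m2)/a^3)) • (q1 t - q2 t) + (-(m3/b^3)) • (q1 t - q3 t)
            + (-(m3/‖(q1 t - q2 t) - (q1 t - q3 t)‖^3)) • ((q1 t - q2 t) - (q1 t - q3 t))
      rw [hN1 t, hN2 t, e3 t]
      have n1 : ‖q2 t - q1 t‖ = a := by rw [norm_sub_rev]; exact ha t
      have n2 : ‖q3 t - q1 t‖ = b := by rw [norm_sub_rev]; exact hb t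
      rw [n1, n2, ha t]
      module)
    (fun t => by
      show deriv (deriv q1) t - deriv (deriv q3) t
          = (-(m2/a^3)) • (q1 t - q2 t) + (-((m1+m3)/b^3)) • (q1 t - q3 t)
            + (m2/‖(q1 t - q2 t) - (q1 t - q3 t)‖^3) • ((q1 t - q2 t) - (q1 t - q3 t))
      rw [hN1 t, hN3 t, e3 t]
      have n1 : ‖q2 t - q1 t‖ = a := by rw [norm_sub_rev]; exact ha t
      have n2 : ‖q3 t - q1 t‖ = b := by rw [norm_sub_rev]; exact hb t
      have n3 : ‖q2 t - q3 t‖ = ‖q3 t - q2 t‖ := norm_sub_rev _ _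
      rw [n1, n2, n3, hb t]
      module)
  obtain ⟨c, hc⟩ := hKey
  refine ⟨c, fun t => ?_⟩
  have := hc t
  rw [e3 t] at this
  rw [← this, norm_sub_rev]

/-- The three-body problem in `ℝ^d` with arbitrary positive masses is unhinged:
if two of the three mutual distances are constant in time, then the third one is
also constant, i.e. the solution is a relative equilibrium. -/
theorem three_body_unhinged
    (d : ℕ) (hd : 1 ≤ d) (m1 m2 m3 : ℝ)
    (hm1 : 0 < m1) (hm2 : 0 < m2) (hm3 : 0 < m3)
    (q1 q2 q3 : ℝ → EuclideanSpace ℝ (Fin d))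
    (hq1 : ContDiff ℝ 2 q1) (hq2 : ContDiff ℝ 2 q2) (hq3 : ContDiff ℝ 2 q3)
    (hsep12 : ∀ t, q1 t ≠ q2 t) (hsep13 : ∀ t, q1 t ≠ q3 t)
    (hsep23 : ∀ t, q2 t ≠ q3 t)
    (hN1 : ∀ t, deriv (deriv q1) t =
      (m2 / ‖q2 t - q1 t‖ ^ 3) • (q2 t - q1 t) +
        (m3 / ‖q3 t - q1 t‖ ^ 3) • (q3 t - q1 t))
    (hN2 : ∀ t, deriv (deriv q2) t =
      (m1 / ‖q1 t - q2 t‖ ^ 3) • (q1 t - q2 t) +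
        (m3 / ‖q3 t - q2 t‖ ^ 3) • (q3 t - q2 t))
    (hN3 : ∀ t, deriv (deriv q3) t =
      (m1 / ‖q1 t - q3 t‖ ^ 3) • (q1 t - q3 t) +
        (m2 / ‖q2 t - q3 t‖ ^ 3) • (q2 t - q3 t))
    (htwo : ((∃ c, ∀ t, ‖q1 t - q2 t‖ = c) ∧ (∃ c, ∀ t, ‖q1 t - q3 t‖ = c)) ∨
      ((∃ c, ∀ t, ‖q1 t - q2 t‖ = c) ∧ (∃ c, ∀ t, ‖q2 t - q3 t‖ = c)) ∨
      ((∃ c, ∀ t, ‖q1 t - q3 t‖ = c) ∧ (∃ c, ∀ t, ‖q2 t - q3 t‖ = c))) :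
    (∃ c, ∀ t, ‖q1 t - q2 t‖ = c) ∧ (∃ c, ∀ t, ‖q1 t - q3 t‖ = c) ∧
      (∃ c, ∀ t, ‖q2 t - q3 t‖ = c) := by
  rcases htwo with ⟨h12, h13⟩ | ⟨h12, h23⟩ | ⟨h13, h23⟩
  · exact ⟨h12, h13, keyQ m1 m2 m3 hm1 hm2 hm3 q1 q2 q3 hq1 hq2 hq3
      hsep12 hsep13 hsep23 hN1 hN2 hN3 h12 h13⟩
  · refine ⟨h12, ?_, h23⟩
    exact keyQ m2 m1 m3 hm2 hm1 hm3 q2 q1 q3 hq2 hq1 hq3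
      (fun t => (hsep12 t).symm) hsep23 hsep13
      hN2 hN1 (fun t => (hN3 t).trans (add_comm _ _))
      (let ⟨c, hc⟩ := h12; ⟨c, fun t => (norm_sub_rev _ _).trans (hc t)⟩) h23
  · obtain ⟨c, hc⟩ := keyQ m3 m1 m2 hm3 hm1 hm2 q3 q1 q2 hq3 hq1 hq2
      (fun t => (hsep13 t).symm) (fun t => (hsep23 t).symm) hsep12
      hN3 (fun t => (hN1 t).trans (add_comm _ _)) (fun t => (hN2 t).trans (add_comm _ _))
      (let ⟨c, hc⟩ := h13; ⟨c, fun t => (norm_sub_rev _ _).trans (hc t)⟩)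
      (let ⟨c, hc⟩ := h23; ⟨c, fun t => (norm_sub_rev _ _).trans (hc t)⟩)
    exact ⟨⟨c, hc⟩, h13, h23⟩
end

section
/- Let m > 0 and let 0 < a < b. Define q3(t) = (0,0), q1(t) = a(cos(ω_a t), sin(ω_a t)) with ω_a = √(m/a³), and q2(t) = b(cos(ω_b t), sin(ω_b t)) with ω_b = √(m/b³). Then these curves satisfy the equations of the planar three-body problem with masses m1 = m2 = 0 and m3 = m, namely q1''(t) = m(q3(t) − q1(t))/‖q3(t) − q1(t)‖³, q2''(t) = m(q3(t) − q2(t))/‖q3(t) − q2(t)‖³, and q3''(t) = 0; moreover the distances r_13(t) = ‖q_1(t) − q_3(t)‖ = a and r_23(t) = ‖q_2(t) − q_3(t)‖ = b are constant, while r_12(t) = ‖q_1(t) − q_2(t)‖ is not constant. In particular, hinged (partially rigid but not rigid) motions exist when two of the masses are zero. -/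
open Real


lemma circ_hasDerivAt (x y : ℝ → ℝ) (x' y' t : ℝ)
    (hx : HasDerivAt x x' t) (hy : HasDerivAt y y' t) :
    HasDerivAt (fun t : ℝ => (WithLp.equiv 2 (Fin 2 → ℝ)).symm ![x t, y t])
      ((WithLp.equiv 2 (Fin 2 → ℝ)).symm ![x', y']) t := by
  have h : HasDerivAt (fun t : ℝ => (![x t, y t] : Fin 2 → ℝ)) ![x', y'] t := by
    rw [hasDerivAt_pi]
    intro i
    fin_cases i
    · simpa using hx
    · simpa using hy
  exact ((PiLp.continuousLinearEquiv 2 ℝ (fun _ : Fin 2 => ℝ)).symm.toContinuousLinearMap.hasFDerivAt.comp_hasDerivAt t h)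

lemma norm_euc (v : EuclideanSpace ℝ (Fin 2)) : ‖v‖ = Real.sqrt (v 0 ^ 2 + v 1 ^ 2) := by
  rw [EuclideanSpace.norm_eq, Fin.sum_univ_two]
  simp [sq_abs]

lemma comp_cos (r ω t : ℝ) :
    HasDerivAt (fun t : ℝ => r * Real.cos (ω * t)) (-(r * ω * Real.sin (ω * t))) t := by
  have h1 : HasDerivAt (fun t : ℝ => ω * t) ω t := by
    simpa using (hasDerivAt_id t).const_mul ω
  have := ((Real.hasDerivAt_cos (ω * t)).comp t h1).const_mul r
  exact this.congr_deriv (by ring)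

lemma comp_sin (r ω t : ℝ) :
    HasDerivAt (fun t : ℝ => r * Real.sin (ω * t)) (r * ω * Real.cos (ω * t)) t := by
  have h1 : HasDerivAt (fun t : ℝ => ω * t) ω t := by
    simpa using (hasDerivAt_id t).const_mul ω
  have := ((Real.hasDerivAt_sin (ω * t)).comp t h1).const_mul r
  exact this.congr_deriv (by ring)

lemma circ_deriv2 (r ω t : ℝ) :
    deriv (deriv (fun t : ℝ => (WithLp.equiv 2 (Fin 2 → ℝ)).symm
        ![r * Real.cos (ω * t), r * Real.sin (ω * t)])) t
      = (WithLp.equiv 2 (Fin 2 → ℝ)).symm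
        ![-(r * ω ^ 2 * Real.cos (ω * t)), -(r * ω ^ 2 * Real.sin (ω * t))] := by
  have hd : deriv (fun t : ℝ => (WithLp.equiv 2 (Fin 2 → ℝ)).symm
      ![r * Real.cos (ω * t), r * Real.sin (ω * t)])
      = fun s : ℝ => (WithLp.equiv 2 (Fin 2 → ℝ)).symm
        ![-(r * ω * Real.sin (ω * s)), r * ω * Real.cos (ω * s)] := by
    funext s
    exact (circ_hasDerivAt _ _ _ _ s (comp_cos r ω s) (comp_sin r ω s)).deriv
  rw [hd]
  have h1 : HasDerivAt (fun s : ℝ => -(r * ω * Real.sin (ω * s)))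
      (-(r * ω ^ 2 * Real.cos (ω * t))) t := by
    have := (comp_sin (r * ω) ω t).neg
    exact this.congr_deriv (by ring)
  have h2 : HasDerivAt (fun s : ℝ => r * ω * Real.cos (ω * s))
      (-(r * ω ^ 2 * Real.sin (ω * t))) t := by
    have := comp_cos (r * ω) ω t
    convert this using 1; ring
  exact (circ_hasDerivAt _ _ _ _ t h1 h2).deriv

lemma sub_norm (x1 y1 x2 y2 : ℝ) :
    ‖(WithLp.equiv 2 (Fin 2 → ℝ)).symm ![x1, y1] - (WithLp.equiv 2 (Fin 2 → ℝ)).symm ![x2, y2]‖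
      = Real.sqrt ((x1 - x2) ^ 2 + (y1 - y2) ^ 2) := by
  rw [norm_euc]
  simp [PiLp.sub_apply, WithLp.equiv_symm_apply, PiLp.toLp_apply]

lemma norm_circ (r ω t : ℝ) (hr : 0 ≤ r) :
    ‖(WithLp.equiv 2 (Fin 2 → ℝ)).symm ![r * Real.cos (ω * t), r * Real.sin (ω * t)]‖ = r := by
  rw [norm_euc]
  simp only [WithLp.equiv_symm_apply, PiLp.toLp_apply, Matrix.cons_val_zero, Matrix.cons_val_one, Matrix.head_cons]
  have h : (r * Real.cos (ω * t)) ^ 2 + (r * Real.sin (ω * t)) ^ 2 = r ^ 2 := by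
    nlinarith [Real.sin_sq_add_cos_sq (ω * t)]
  rw [h, Real.sqrt_sq hr]

lemma orbit_eq (r ω c t : ℝ) (h : c = ω ^ 2) :
    (WithLp.equiv 2 (Fin 2 → ℝ)).symm
        ![-(r * ω ^ 2 * Real.cos (ω * t)), -(r * ω ^ 2 * Real.sin (ω * t))]
      = c • (-((WithLp.equiv 2 (Fin 2 → ℝ)).symm
        ![r * Real.cos (ω * t), r * Real.sin (ω * t)]) : EuclideanSpace ℝ (Fin 2)) := by
  ext i
  fin_cases i <;>
    simp [PiLp.smul_apply, PiLp.sub_apply, WithLp.equiv_symm_apply, PiLp.toLp_apply, h] <;> ring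

/-- Hinged motions exist when two of the three masses vanish: with `m₁ = m₂ = 0`
and `m₃ = m`, two bodies on circular orbits of radii `a < b` around the third
give a solution where `r₁₃ ≡ a` and `r₂₃ ≡ b` are constant but `r₁₂` is not. -/
theorem hinged_solution_with_two_zero_masses
    (m a b : ℝ) (hm : 0 < m) (ha : 0 < a) (hab : a < b) :
    ∀ q1 q2 q3 : ℝ → EuclideanSpace ℝ (Fin 2),
      (q1 = fun t => (WithLp.equiv 2 (Fin 2 → ℝ)).symm
        ![a * Real.cos (Real.sqrt (m / a ^ 3) * t),
          a * Real.sin (Real.sqrt (m / a ^ 3) * t)]) →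
      (q2 = fun t => (WithLp.equiv 2 (Fin 2 → ℝ)).symm
        ![b * Real.cos (Real.sqrt (m / b ^ 3) * t),
          b * Real.sin (Real.sqrt (m / b ^ 3) * t)]) →
      (q3 = fun _ => 0) →
      (∀ t, deriv (deriv q1) t = (m / ‖q3 t - q1 t‖ ^ 3) • (q3 t - q1 t)) ∧
      (∀ t, deriv (deriv q2) t = (m / ‖q3 t - q2 t‖ ^ 3) • (q3 t - q2 t)) ∧
      (∀ t, deriv (deriv q3) t = 0) ∧
      (∀ t, ‖q1 t - q3 t‖ = a) ∧
      (∀ t, ‖q2 t - q3 t‖ = b) ∧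
      ¬(∃ c, ∀ t, ‖q1 t - q2 t‖ = c) := by
  intro q1 q2 q3 h1 h2 h3
  subst h1 h2 h3
  have hb : 0 < b := ha.trans hab
  have hωa : Real.sqrt (m / a ^ 3) ^ 2 = m / a ^ 3 :=
    Real.sq_sqrt (le_of_lt (div_pos hm (pow_pos ha 3)))
  have hωb : Real.sqrt (m / b ^ 3) ^ 2 = m / b ^ 3 :=
    Real.sq_sqrt (le_of_lt (div_pos hm (pow_pos hb 3)))
  refine ⟨?_, ?_, ?_, ?_, ?_, ?_⟩
  · intro t
    beta_reduce
    rw [circ_deriv2, zero_sub, norm_neg, norm_circ a _ t ha.le]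
    exact orbit_eq a _ _ t hωa.symm
  · intro t
    beta_reduce
    rw [circ_deriv2, zero_sub, norm_neg, norm_circ b _ t hb.le]
    exact orbit_eq b _ _ t hωb.symm
  · intro t; simp
  · intro t; rw [sub_zero]; exact norm_circ a _ t ha.le
  · intro t; rw [sub_zero]; exact norm_circ b _ t hb.le
  · rintro ⟨c, hc⟩
    set ωa := Real.sqrt (m / a ^ 3) with hωadef
    set ωb := Real.sqrt (m / b ^ 3) with hωbdef
    have hωlt : ωb < ωa := by
      apply Real.sqrt_lt_sqrt (le_of_lt (div_pos hm (pow_pos hb 3)))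
      apply div_lt_div_of_pos_left hm (pow_pos ha 3)
      exact pow_lt_pow_left₀ hab ha.le (by norm_num)
    have h0 := hc 0
    rw [sub_norm] at h0
    simp at h0
    have hc0 : c = b - a := by
      rw [show (a - b) ^ 2 = (b - a) ^ 2 by ring, Real.sqrt_sq (by linarith)] at h0
      linarith
    set T := Real.pi / (ωa - ωb) with hT
    have hαβ : ωa * T - ωb * T = Real.pi := by
      have hne : ωa - ωb ≠ 0 := sub_ne_zero.mpr hωlt.ne'
      rw [hT]; field_simp
    have hcos : Real.cos (ωa * T) * Real.cos (ωb * T)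
        + Real.sin (ωa * T) * Real.sin (ωb * T) = -1 := by
      rw [← Real.cos_sub, hαβ, Real.cos_pi]
    have hT' := hc T
    rw [sub_norm] at hT'
    have hsq : (a * Real.cos (ωa * T) - b * Real.cos (ωb * T)) ^ 2
        + (a * Real.sin (ωa * T) - b * Real.sin (ωb * T)) ^ 2 = (a + b) ^ 2 := by
      linear_combination a ^ 2 * Real.sin_sq_add_cos_sq (ωa * T)
        + b ^ 2 * Real.sin_sq_add_cos_sq (ωb * T) - 2 * a * b * hcos
    rw [hsq, Real.sqrt_sq (by linarith)] at hT'
    linarith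
end

section
/- There exist T > 0 and curves q1, q2, q3 : (−T, T) → ℝ² solving the planar circular restricted three-body problem with masses m1 = m2 = 1 and m3 = 0 — that is, q1''(t) = (q2(t) − q1(t))/‖q2(t) − q1(t)‖³, q2''(t) = (q1(t) − q2(t))/‖q1(t) − q2(t)‖³, and q3''(t) = (q1(t) − q3(t))/‖q1(t) − q3(t)‖³ + (q2(t) − q3(t))/‖q2(t) − q3(t)‖³, with q_i(t) ≠ q_j(t) for i ≠ j — such that r_12(t) = ‖q_1(t) − q_2(t)‖ = 1 for all t but r_13(t) = ‖q_1(t) − q_3(t)‖ is not constant. In particular, the nonexistence of partially rigid motions fails if one of the masses is zero. -/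
open Set Real
noncomputable section
namespace PRTB

abbrev E2 := EuclideanSpace ℝ (Fin 2)
def e0 : E2 := EuclideanSpace.single 0 1
def e1 : E2 := EuclideanSpace.single 1 1

def Q1 (t : ℝ) : E2 := (Real.cos (Real.sqrt 2 * t) / 2) • e0 + (Real.sin (Real.sqrt 2 * t) / 2) • e1
def Q1' (t : ℝ) : E2 :=
  (-Real.sin (Real.sqrt 2 * t) * Real.sqrt 2 / 2) • e0 +
    (Real.cos (Real.sqrt 2 * t) * Real.sqrt 2 / 2) • e1

lemma hasDerivAt_angle (t : ℝ) : HasDerivAt (fun t : ℝ => Real.sqrt 2 * t) (Real.sqrt 2) t := by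
  simpa using (hasDerivAt_id t).const_mul (Real.sqrt 2)

lemma hasDerivAt_Q1 (t : ℝ) : HasDerivAt Q1 (Q1' t) t :=
  (((hasDerivAt_angle t).cos.div_const 2).smul_const e0).add
    (((hasDerivAt_angle t).sin.div_const 2).smul_const e1)

lemma hasDerivAt_Q1' (t : ℝ) : HasDerivAt Q1' (-(2 : ℝ) • Q1 t) t := by
  have h2 : Real.sqrt 2 * Real.sqrt 2 = 2 := Real.mul_self_sqrt (by norm_num)
  have hc : HasDerivAt (fun x : ℝ => -Real.sin (Real.sqrt 2 * x) * Real.sqrt 2 / 2)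
      (-2 * (Real.cos (Real.sqrt 2 * t) / 2)) t := by
    have := ((hasDerivAt_angle t).sin.neg.mul_const (Real.sqrt 2)).div_const 2
    refine this.congr_deriv ?_
    linear_combination (-(Real.cos (Real.sqrt 2 * t) / 2)) * h2
  have hs : HasDerivAt (fun x : ℝ => Real.cos (Real.sqrt 2 * x) * Real.sqrt 2 / 2)
      (-2 * (Real.sin (Real.sqrt 2 * t) / 2)) t := by
    have := ((hasDerivAt_angle t).cos.mul_const (Real.sqrt 2)).div_const 2
    refine this.congr_deriv ?_
    linear_combination (-(Real.sin (Real.sqrt 2 * t) / 2)) * h2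
  have := (hc.smul_const e0).add (hs.smul_const e1)
  refine HasDerivAt.congr_deriv (f := Q1') this ?_
  simp only [Q1, smul_add, smul_smul]

lemma norm_combo (a b : ℝ) : ‖a • e0 + b • e1‖ = Real.sqrt (a ^ 2 + b ^ 2) := by
  rw [EuclideanSpace.norm_eq]
  congr 1
  simp [e0, e1, Fin.sum_univ_two, EuclideanSpace.single_apply, sq_abs, sq]

lemma inner_combo (a b c d : ℝ) :
    (inner ℝ (a • e0 + b • e1) (c • e0 + d • e1) : ℝ) = a * c + b * d := by
  simp [e0, e1, PiLp.inner_apply, Fin.sum_univ_two, EuclideanSpace.single_apply]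
  ring

lemma norm_Q1 (t : ℝ) : ‖Q1 t‖ = 1 / 2 := by
  rw [Q1, norm_combo]
  have : (Real.cos (Real.sqrt 2 * t) / 2) ^ 2 + (Real.sin (Real.sqrt 2 * t) / 2) ^ 2
      = (1 / 2) ^ 2 := by
    have := Real.sin_sq_add_cos_sq (Real.sqrt 2 * t)
    ring_nf
    nlinarith [this]
  rw [this, Real.sqrt_sq (by norm_num)]

def Q2 (t : ℝ) : E2 := -Q1 t

lemma norm_Q12 (t : ℝ) : ‖Q1 t - Q2 t‖ = 1 := by
  have : Q1 t - Q2 t = (2 : ℝ) • Q1 t := by simp [Q2, two_smul]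
  rw [this, norm_smul, norm_Q1]
  norm_num

/-- Force field on the massless body. -/
def F (s : ℝ) (x : E2) : E2 :=
  (‖Q1 s - x‖ ^ 3)⁻¹ • (Q1 s - x) + (‖Q2 s - x‖ ^ 3)⁻¹ • (Q2 s - x)

/-- Autonomous vector field: state `(time, position, velocity)`. -/
def V (y : ℝ × E2 × E2) : ℝ × E2 × E2 := (1, y.2.2, F y.1 y.2.1)

def y₀ : ℝ × E2 × E2 := (0, (3 : ℝ) • e0, e0)

lemma Q1_zero : Q1 0 = (1 / 2 : ℝ) • e0 := by
  simp [Q1]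

lemma contDiff_Q1 : ContDiff ℝ 1 Q1 := by
  apply ContDiff.add
  · exact ((Real.contDiff_cos.comp (contDiff_const.mul contDiff_id)).div_const 2).smul
      contDiff_const
  · exact ((Real.contDiff_sin.comp (contDiff_const.mul contDiff_id)).div_const 2).smul
      contDiff_const

lemma e0_ne_zero : e0 ≠ 0 := by
  intro h
  have := congrArg (· 0) h
  simp [e0, EuclideanSpace.single_apply] at this

lemma contDiffAt_V : ContDiffAt ℝ 1 V y₀ := by
  have h1 : ContDiffAt ℝ 1 (fun y : ℝ × E2 × E2 => Q1 y.1 - y.2.1) y₀ :=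
    ((contDiff_Q1.comp contDiff_fst).sub (contDiff_fst.comp contDiff_snd)).contDiffAt
  have h2 : ContDiffAt ℝ 1 (fun y : ℝ × E2 × E2 => Q2 y.1 - y.2.1) y₀ := by
    have hQ2 : ContDiff ℝ 1 Q2 := contDiff_Q1.neg
    exact ((hQ2.comp contDiff_fst).sub (contDiff_fst.comp contDiff_snd)).contDiffAt
  have hne1 : Q1 y₀.1 - y₀.2.1 ≠ 0 := by
    show Q1 0 - (3 : ℝ) • e0 ≠ 0
    rw [Q1_zero, ← sub_smul]
    exact smul_ne_zero (by norm_num) e0_ne_zero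
  have hne2 : Q2 y₀.1 - y₀.2.1 ≠ 0 := by
    show -Q1 0 - (3 : ℝ) • e0 ≠ 0
    rw [Q1_zero, ← neg_smul, ← sub_smul]
    exact smul_ne_zero (by norm_num) e0_ne_zero
  have hm1 : ContDiffAt ℝ 1
      (fun y : ℝ × E2 × E2 => (‖Q1 y.1 - y.2.1‖ ^ 3)⁻¹ • (Q1 y.1 - y.2.1)) y₀ :=
    (((h1.norm ℝ hne1).pow 3).inv (pow_ne_zero 3 (norm_ne_zero_iff.2 hne1))).smul h1
  have hm2 : ContDiffAt ℝ 1
      (fun y : ℝ × E2 × E2 => (‖Q2 y.1 - y.2.1‖ ^ 3)⁻¹ • (Q2 y.1 - y.2.1)) y₀ :=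
    (((h2.norm ℝ hne2).pow 3).inv (pow_ne_zero 3 (norm_ne_zero_iff.2 hne2))).smul h2
  show ContDiffAt ℝ 1 (fun y : ℝ × E2 × E2 => ((1 : ℝ), y.2.2, F y.1 y.2.1)) y₀
  simp only [F]
  exact ContDiffAt.prodMk contDiffAt_const (ContDiffAt.prodMk ((contDiff_snd.comp contDiff_snd).contDiffAt)
    (hm1.add hm2))

lemma hasDerivAt_fst {α β : Type*} [NormedAddCommGroup α] [NormedSpace ℝ α]
    [NormedAddCommGroup β] [NormedSpace ℝ β] {f : ℝ → α × β} {f' : α × β} {t : ℝ}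
    (h : HasDerivAt f f' t) : HasDerivAt (fun t => (f t).1) f'.1 t := by
  simpa using h.hasFDerivAt.fst.hasDerivAt

lemma hasDerivAt_snd {α β : Type*} [NormedAddCommGroup α] [NormedSpace ℝ α]
    [NormedAddCommGroup β] [NormedSpace ℝ β] {f : ℝ → α × β} {f' : α × β} {t : ℝ}
    (h : HasDerivAt f f' t) : HasDerivAt (fun t => (f t).2) f'.2 t := by
  simpa using h.hasFDerivAt.snd.hasDerivAt

lemma norm_e0 : ‖e0‖ = 1 := by
  have := norm_combo 1 0
  simpa using this

end PRTB

open PRTB Set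

/-- Partially rigid motions exist in the circular restricted three-body problem
(masses `m₁ = m₂ = 1`, `m₃ = 0`): there are curves defined on an interval
`(-T, T)` solving the equations of motion such that `r₁₂ ≡ 1` but `r₁₃` is not
constant. -/
theorem partially_rigid_restricted_three_body :
    ∃ T > (0 : ℝ), ∃ q1 q2 q3 : ℝ → EuclideanSpace ℝ (Fin 2),
      (∀ t ∈ Set.Ioo (-T) T, q1 t ≠ q2 t ∧ q1 t ≠ q3 t ∧ q2 t ≠ q3 t) ∧
      (∀ t ∈ Set.Ioo (-T) T, deriv (deriv q1) t =
        (‖q2 t - q1 t‖ ^ 3)⁻¹ • (q2 t - q1 t)) ∧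
      (∀ t ∈ Set.Ioo (-T) T, deriv (deriv q2) t =
        (‖q1 t - q2 t‖ ^ 3)⁻¹ • (q1 t - q2 t)) ∧
      (∀ t ∈ Set.Ioo (-T) T, deriv (deriv q3) t =
        (‖q1 t - q3 t‖ ^ 3)⁻¹ • (q1 t - q3 t) +
          (‖q2 t - q3 t‖ ^ 3)⁻¹ • (q2 t - q3 t)) ∧
      (∀ t ∈ Set.Ioo (-T) T, ‖q1 t - q2 t‖ = 1) ∧
      ¬(∃ c, ∀ t ∈ Set.Ioo (-T) T, ‖q1 t - q3 t‖ = c) := by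
  obtain ⟨f, hf0, ε, hε, hf⟩ :=
    ContDiffAt.exists_forall_mem_closedBall_exists_eq_forall_mem_Ioo_hasDerivAt₀ contDiffAt_V (0 : ℝ)
  rw [zero_sub, zero_add] at hf
  set q3 : ℝ → E2 := fun t => (f t).2.1 with hq3def
  set p : ℝ → E2 := fun t => (f t).2.2 with hpdef
  have hq30 : q3 0 = (3 : ℝ) • e0 := by rw [hq3def]; simp only; rw [hf0]; rfl
  have hp0 : p 0 = e0 := by rw [hpdef]; simp only; rw [hf0]; rfl
  -- the time component of `f` is `t`
  have hτ : ∀ t ∈ Set.Ioo (-ε) ε, (f t).1 = t := by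
    have key : ∀ a b : ℝ, Set.Icc a b ⊆ Set.Ioo (-ε) ε →
        ∀ x ∈ Set.Icc a b, (f x).1 - x = (f a).1 - a := by
      intro a b hsub
      refine constant_of_has_deriv_right_zero ?_ ?_
      · intro x hx
        exact ((hasDerivAt_fst (hf x (hsub hx))).sub
          (hasDerivAt_id x)).continuousAt.continuousWithinAt
      · intro x hx
        have h := (hasDerivAt_fst (hf x (hsub (Set.Ico_subset_Icc_self hx)))).sub
          (hasDerivAt_id x)
        have h1 : (V (f x)).1 = 1 := rfl
        rw [h1, sub_self] at h
        exact h.hasDerivWithinAt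
    intro t ht
    have h00 : (f 0).1 - 0 = 0 := by rw [hf0]; simp [y₀]
    rcases le_total 0 t with h | h
    · have hsub : Set.Icc 0 t ⊆ Set.Ioo (-ε) ε := fun x hx =>
        ⟨by nlinarith [hx.1], by nlinarith [hx.2, ht.2]⟩
      have := key 0 t hsub t ⟨h, le_refl t⟩
      rw [h00] at this; linarith [this]
    · have hsub : Set.Icc t 0 ⊆ Set.Ioo (-ε) ε := fun x hx =>
        ⟨by nlinarith [hx.1, ht.1], by nlinarith [hx.2]⟩
      have := key t 0 hsub 0 ⟨h, le_refl 0⟩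
      rw [h00] at this; linarith [this]
  -- derivatives of position and velocity of the third body
  have hq3 : ∀ t ∈ Set.Ioo (-ε) ε, HasDerivAt q3 (p t) t := fun t ht =>
    hasDerivAt_fst (hasDerivAt_snd (hf t ht))
  have hp : ∀ t ∈ Set.Ioo (-ε) ε, HasDerivAt p (F t (q3 t)) t := by
    intro t ht
    have h := hasDerivAt_snd (hasDerivAt_snd (hf t ht))
    have h1 : (V (f t)).2.2 = F (f t).1 (q3 t) := rfl
    rw [h1, hτ t ht] at h
    exact h
  -- choose T small enough that q3 stays near 3•e0
  obtain ⟨δ, hδ, hball⟩ := Metric.continuousAt_iff.mp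
    (hq3 0 ⟨by linarith, hε⟩).continuousAt 1 one_pos
  set T := min ε δ with hT
  have hsubT : Set.Ioo (-T) T ⊆ Set.Ioo (-ε) ε := fun x hx =>
    ⟨by have := min_le_left ε δ; simp only [Set.mem_Ioo] at hx; linarith [hx.1],
     by have := min_le_left ε δ; simp only [Set.mem_Ioo] at hx; linarith [hx.2]⟩
  have hfar : ∀ t ∈ Set.Ioo (-T) T, (2 : ℝ) < ‖q3 t‖ := by
    intro t ht
    have hdist : dist t 0 < δ := by
      simp only [Set.mem_Ioo] at ht
      have := min_le_right ε δ
      rw [Real.dist_eq, sub_zero, abs_lt]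
      constructor <;> linarith [ht.1, ht.2]
    have h1 := hball hdist
    rw [hq30, dist_eq_norm] at h1
    have h3 : ‖(3 : ℝ) • e0‖ = 3 := by rw [norm_smul, norm_e0]; norm_num
    have := norm_sub_norm_le ((3 : ℝ) • e0) (q3 t)
    rw [h3, norm_sub_rev] at this
    linarith
  have hQ1n : ∀ t, ‖Q1 t‖ = 1 / 2 := norm_Q1
  refine ⟨min ε δ, lt_min hε hδ, Q1, Q2, q3, ?_, ?_, ?_, ?_, ?_, ?_⟩
  · -- distinctness
    intro t ht
    refine ⟨?_, ?_, ?_⟩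
    · intro h
      have := norm_Q12 t
      rw [h, sub_self, norm_zero] at this
      norm_num at this
    · intro h
      have := hfar t ht
      rw [← h, hQ1n t] at this
      norm_num at this
    · intro h
      have := hfar t ht
      have h2 : ‖Q2 t‖ = 1 / 2 := by rw [Q2, norm_neg]; exact hQ1n t
      rw [← h, h2] at this
      norm_num at this
  · -- equation for q1
    intro t ht
    have hdQ1 : deriv Q1 = Q1' := funext fun s => (hasDerivAt_Q1 s).deriv
    rw [hdQ1, (hasDerivAt_Q1' t).deriv]
    have h21 : Q2 t - Q1 t = (-2 : ℝ) • Q1 t := by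
      rw [Q2]
      rw [show ((-2 : ℝ) • Q1 t) = -((2 : ℝ) • Q1 t) from by rw [neg_smul], two_smul]
      abel
    have hn : ‖Q2 t - Q1 t‖ = 1 := by rw [norm_sub_rev]; exact norm_Q12 t
    rw [hn, h21]
    norm_num
  · -- equation for q2
    intro t ht
    have hdQ2 : deriv Q2 = fun s => -Q1' s := funext fun s => (hasDerivAt_Q1 s).neg.deriv
    rw [hdQ2, HasDerivAt.deriv (f := fun s => -Q1' s) (hasDerivAt_Q1' t).neg]
    have h12 : Q1 t - Q2 t = (2 : ℝ) • Q1 t := by rw [Q2, two_smul]; abel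
    rw [norm_Q12 t, h12]
    rw [neg_smul, neg_neg, two_smul]
    norm_num [two_smul]
  · -- equation for q3
    intro t ht
    have hdq3 : Set.EqOn (deriv q3) p (Set.Ioo (-ε) ε) := fun s hs => (hq3 s hs).deriv
    have hev : deriv q3 =ᶠ[nhds t] p :=
      Filter.eventuallyEq_of_mem (isOpen_Ioo.mem_nhds (hsubT ht)) hdq3
    rw [hev.deriv_eq, (hp t (hsubT ht)).deriv]
    rfl
  · -- r12 = 1
    intro t ht
    exact norm_Q12 t
  · -- r13 not constant
    rintro ⟨c, hc⟩
    have h0T : (0 : ℝ) ∈ Set.Ioo (-T) T := ⟨by simp [hT]; constructor <;> linarith, lt_min hε hδ⟩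
    set ψ : ℝ → ℝ := fun s => (inner ℝ (Q1 s - q3 s) (Q1 s - q3 s) : ℝ) with hψdef
    have hψconst : ∀ s ∈ Set.Ioo (-T) T, ψ s = c ^ 2 := by
      intro s hs
      rw [hψdef]
      simp only
      rw [real_inner_self_eq_norm_sq, hc s hs]
    have hd : HasDerivAt ψ
        ((inner ℝ (Q1 0 - q3 0) (Q1' 0 - p 0) : ℝ) + inner ℝ (Q1' 0 - p 0) (Q1 0 - q3 0)) 0 :=
      HasDerivAt.inner ℝ ((hasDerivAt_Q1 0).sub (hq3 0 ⟨by linarith, hε⟩))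
        ((hasDerivAt_Q1 0).sub (hq3 0 ⟨by linarith, hε⟩))
    have hd0 : HasDerivAt ψ 0 0 := by
      have hev : ψ =ᶠ[nhds 0] fun _ => c ^ 2 :=
        Filter.eventuallyEq_of_mem (isOpen_Ioo.mem_nhds h0T) (fun s hs => hψconst s hs)
      exact (hasDerivAt_const 0 (c ^ 2)).congr_of_eventuallyEq hev
    have huniq := hd.unique hd0
    have hu : Q1 0 - q3 0 = (-(5 / 2) : ℝ) • e0 + (0 : ℝ) • e1 := by
      rw [Q1_zero, hq30, ← sub_smul]
      norm_num
    have hdv : Q1' 0 - p 0 = (-1 : ℝ) • e0 + (Real.sqrt 2 / 2 : ℝ) • e1 := by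
      rw [hp0, Q1']
      norm_num
      module
    rw [hu, hdv, inner_combo, inner_combo] at huniq
    norm_num at huniq
end
end
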